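/- Let F/F_q be a function field of genus g with N_F rational places. Then the gonality γ := min{deg (f)_∞ : f ∈ F \ F_q} satisfies γ ≥ N_F/(q+1). -/

import Mathlib

/-- A rational (degree-one) place of a function field `F/F_q`: a normalized discrete
valuation `v` on `F` that is trivial on the constants, together with its residue map
`res : F → F_q` (extended by `0` at poles), whose residue field is `F_q` itself. -/
structure RationalPlace (Fq F : Type*) [Field Fq] [Field F] [Algebra Fq F] where
  v : F → ℤ
  v_zero : v 0 = 0
  v_mul : ∀ x y : F, x ≠ 0 → y ≠ 0 → v (x * y) = v x + v y
  v_add : ∀ x y : F, x ≠ 0 → y ≠ 0 → x + y ≠ 0 → min (v x) (v y) ≤ v (x + y)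
  v_algebraMap : ∀ a : Fq, a ≠ 0 → v (algebraMap Fq F a) = 0
  v_surj : ∃ x : F, x ≠ 0 ∧ v x = 1
  res : F → Fq
  res_pole : ∀ x : F, v x < 0 → res x = 0
  res_add : ∀ x y : F, 0 ≤ v x → 0 ≤ v y → res (x + y) = res x + res y
  res_mul : ∀ x y : F, 0 ≤ v x → 0 ≤ v y → res (x * y) = res x * res y
  res_algebraMap : ∀ a : Fq, res (algebraMap Fq F a) = a
  res_eq_zero_iff : ∀ x : F, 0 ≤ v x → (res x = 0 ↔ x = 0 ∨ 0 < v x)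

namespace RationalPlace

variable {Fq F : Type*} [Field Fq] [Field F] [Algebra Fq F] (P : RationalPlace Fq F)

lemma v_one : P.v 1 = 0 := by
  have h := P.v_mul 1 1 one_ne_zero one_ne_zero
  simpa using h.symm

lemma v_inv (x : F) (hx : x ≠ 0) : P.v x⁻¹ = - P.v x := by
  have h := P.v_mul x x⁻¹ hx (inv_ne_zero hx)
  rw [mul_inv_cancel₀ hx, P.v_one] at h
  omega

lemma v_pow (x : F) (hx : x ≠ 0) (n : ℕ) : P.v (x ^ n) = n * P.v x := by
  induction n with
  | zero => simpa using P.v_one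
  | succ n ih =>
    rw [pow_succ, P.v_mul _ _ (pow_ne_zero _ hx) hx, ih]
    push_cast; ring

lemma v_zpow (x : F) (hx : x ≠ 0) (n : ℤ) : P.v (x ^ n) = n * P.v x := by
  cases n with
  | ofNat n => simpa using P.v_pow x hx n
  | negSucc n =>
    rw [zpow_negSucc, P.v_inv _ (pow_ne_zero _ hx), P.v_pow x hx]
    rw [Int.negSucc_eq]
    push_cast; ring

lemma v_neg (x : F) : P.v (-x) = P.v x := by
  rcases eq_or_ne x 0 with rfl | hx
  · simp
  · have hm : P.v ((-1 : F) * x) = P.v (-1) + P.v x :=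
      P.v_mul (-1) x (by norm_num) hx
    have h1 : P.v ((-1 : F) * (-1)) = P.v (-1) + P.v (-1) :=
      P.v_mul (-1) (-1) (by norm_num) (by norm_num)
    rw [show ((-1 : F) * (-1)) = 1 by ring, P.v_one] at h1
    rw [show ((-1 : F) * x) = -x by ring] at hm
    omega

lemma v_div (x y : F) (hx : x ≠ 0) (hy : y ≠ 0) : P.v (x / y) = P.v x - P.v y := by
  rw [div_eq_mul_inv, P.v_mul x y⁻¹ hx (inv_ne_zero hy), P.v_inv y hy]
  ring

lemma v_add' (x y : F) (h : x + y ≠ 0) : min (P.v x) (P.v y) ≤ P.v (x + y) := by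
  rcases eq_or_ne x 0 with rfl | hx
  · simpa using min_le_of_right_le le_rfl
  rcases eq_or_ne y 0 with rfl | hy
  · simpa [P.v_zero] using min_le_of_left_le le_rfl
  exact P.v_add x y hx hy h

lemma v_add_eq_left (x y : F) (hx : x ≠ 0) (hlt : P.v x < P.v y) :
    P.v (x + y) = P.v x := by
  rcases eq_or_ne y 0 with rfl | hy
  · simp
  have hne : x + y ≠ 0 := by
    intro h
    have : y = -x := by linear_combination h
    rw [this, P.v_neg] at hlt; omega
  have h1 : min (P.v x) (P.v y) ≤ P.v (x + y) := P.v_add' x y hne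
  have h2 : min (P.v (x + y)) (P.v (-y)) ≤ P.v x := by
    have := P.v_add' (x + y) (-y) (by simpa using hx)
    simpa using this
  rw [P.v_neg] at h2
  omega

lemma v_sum {ι : Type*} (s : Finset ι) (t : ι → F) (B : ℤ) (hB : B ≤ 0)
    (h : ∀ i ∈ s, B ≤ P.v (t i)) : B ≤ P.v (∑ i ∈ s, t i) := by
  classical
  induction s using Finset.induction_on with
  | empty => simpa [P.v_zero] using hB
  | insert a s' hni ih =>
    rw [Finset.sum_insert hni]
    rcases eq_or_ne (t a + ∑ i ∈ s', t i) 0 with h0 | h0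
    · rw [h0, P.v_zero]; exact hB
    · have := P.v_add' (t a) (∑ i ∈ s', t i) h0
      have h1 := h a (Finset.mem_insert_self a s')
      have h2 := ih fun i hi => h i (Finset.mem_insert_of_mem hi)
      omega

lemma res_zero : P.res 0 = 0 := by
  rw [P.res_eq_zero_iff 0 (by rw [P.v_zero])]
  exact Or.inl rfl

lemma res_one : P.res 1 = 1 := by
  simpa using P.res_algebraMap 1

lemma res_sum {ι : Type*} (s : Finset ι) (t : ι → F)
    (h : ∀ i ∈ s, 0 ≤ P.v (t i)) :
    P.res (∑ i ∈ s, t i) = ∑ i ∈ s, P.res (t i) := by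
  classical
  induction s using Finset.induction_on with
  | empty => simpa using P.res_zero
  | insert a s' hni ih =>
    rw [Finset.sum_insert hni, Finset.sum_insert hni,
      P.res_add _ _ (h a (Finset.mem_insert_self a s'))
        (P.v_sum s' t 0 le_rfl fun i hi => h i (Finset.mem_insert_of_mem hi)),
      ih fun i hi => h i (Finset.mem_insert_of_mem hi)]

lemma res_ne_zero (x : F) (hx : x ≠ 0) (h : P.v x = 0) : P.res x ≠ 0 := by
  intro hr
  rcases (P.res_eq_zero_iff x (by omega)).1 hr with h1 | h1
  · exact hx h1
  · omega

lemma res_of_pos (x : F) (h : 0 < P.v x) : P.res x = 0 := by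
  rw [P.res_eq_zero_iff x (by omega)]
  exact Or.inr h

lemma v_res_eq_zero (x : F) (hx : x ≠ 0) (hv : 0 ≤ P.v x) (hr : P.res x ≠ 0) :
    P.v x = 0 := by
  by_contra h
  exact hr ((P.res_eq_zero_iff x hv).2 (Or.inr (by omega)))

lemma res_pow (x : F) (hx : x ≠ 0) (h : 0 ≤ P.v x) (n : ℕ) :
    P.res (x ^ n) = (P.res x) ^ n := by
  induction n with
  | zero => simpa using P.res_one
  | succ n ih =>
    rw [pow_succ, P.res_mul _ _ ?_ h, ih, pow_succ]
    rw [P.v_pow x hx n]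
    positivity

end RationalPlace

namespace RationalPlace

open Polynomial

variable {Fq F : Type*} [Field Fq] [Field F] [Algebra Fq F] (P : RationalPlace Fq F)

lemma v_algebraMap_nonneg (a : Fq) : 0 ≤ P.v (algebraMap Fq F a) := by
  rcases eq_or_ne a 0 with rfl | ha
  · simp [P.v_zero]
  · rw [P.v_algebraMap a ha]

lemma v_term_nonneg (x : F) (hx : 0 ≤ P.v x) (a : Fq) (k : ℕ) :
    0 ≤ P.v (algebraMap Fq F a * x ^ k) := by
  rcases eq_or_ne a 0 with rfl | ha
  · simp [P.v_zero]
  rcases eq_or_ne x 0 with rfl | hx0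
  · rcases Nat.eq_zero_or_pos k with rfl | hk
    · simpa using P.v_algebraMap_nonneg a
    · simp [zero_pow (by omega : k ≠ 0), P.v_zero]
  rw [P.v_mul _ _ (by simpa using (algebraMap Fq F).injective.ne ha) (pow_ne_zero _ hx0),
    P.v_algebraMap a ha, P.v_pow x hx0]
  positivity

lemma v_aeval_nonneg (x : F) (hx : 0 ≤ P.v x) (p : Fq[X]) :
    0 ≤ P.v (Polynomial.aeval x p) := by
  rw [Polynomial.aeval_eq_sum_range (p := p) x]
  refine P.v_sum _ _ 0 le_rfl fun k _ => ?_
  rw [Algebra.smul_def]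
  exact P.v_term_nonneg x hx _ k

lemma res_aeval (x : F) (hx : 0 ≤ P.v x) (p : Fq[X]) :
    P.res (Polynomial.aeval x p) = Polynomial.eval (P.res x) p := by
  rcases eq_or_ne x 0 with rfl | hx0
  · rw [show Polynomial.aeval (0 : F) p = algebraMap Fq F (p.coeff 0) by
      simp [Polynomial.aeval_def, Polynomial.eval₂_at_zero]]
    rw [P.res_algebraMap, P.res_zero]
    exact Polynomial.coeff_zero_eq_eval_zero p
  rw [Polynomial.aeval_eq_sum_range (p := p) x,
    P.res_sum _ _ (fun k _ => by rw [Algebra.smul_def]; exact P.v_term_nonneg x hx _ k),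
    Polynomial.eval_eq_sum_range]
  refine Finset.sum_congr rfl fun k _ => ?_
  rw [Algebra.smul_def,
    P.res_mul _ _ (P.v_algebraMap_nonneg _) (by rw [P.v_pow x hx0]; positivity),
    P.res_algebraMap, P.res_pow x hx0 hx]

lemma v_aeval_ge (x : F) (hx : P.v x < 0) (d : ℕ) (p : Fq[X]) (hp : p.natDegree ≤ d) :
    (d : ℤ) * P.v x ≤ P.v (Polynomial.aeval x p) := by
  have hx0 : x ≠ 0 := by intro h; rw [h, P.v_zero] at hx; omega
  have hB : (d : ℤ) * P.v x ≤ 0 := by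
    have : (0:ℤ) ≤ d := by positivity
    nlinarith
  rw [Polynomial.aeval_eq_sum_range' (n := d + 1) (by omega) x]
  refine P.v_sum _ _ _ hB fun k hk => ?_
  rcases eq_or_ne (p.coeff k) 0 with h0 | h0
  · rw [h0, zero_smul, P.v_zero]; exact hB
  rw [Algebra.smul_def, P.v_mul _ _ (by simpa using (algebraMap Fq F).injective.ne h0)
      (pow_ne_zero _ hx0), P.v_algebraMap _ h0, P.v_pow x hx0, zero_add]
  have hkd : k ≤ d := by simpa [Nat.lt_succ_iff] using Finset.mem_range.1 hk
  nlinarith [hx, (by exact_mod_cast hkd : (k:ℤ) ≤ d)]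

lemma v_aeval_eq (x : F) (hx : P.v x < 0) (p : Fq[X]) (hp : p ≠ 0) :
    P.v (Polynomial.aeval x p) = (p.natDegree : ℤ) * P.v x := by
  have hx0 : x ≠ 0 := by intro h; rw [h, P.v_zero] at hx; omega
  have hlead : p.leadingCoeff ≠ 0 := Polynomial.leadingCoeff_ne_zero.2 hp
  have hmain : Polynomial.aeval x p
      = algebraMap Fq F p.leadingCoeff * x ^ p.natDegree + Polynomial.aeval x p.eraseLead := by
    conv_lhs => rw [← Polynomial.eraseLead_add_C_mul_X_pow p]
    rw [map_add, map_mul, Polynomial.aeval_C, map_pow, Polynomial.aeval_X]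
    ring
  have hvt : P.v (algebraMap Fq F p.leadingCoeff * x ^ p.natDegree)
      = (p.natDegree : ℤ) * P.v x := by
    rw [P.v_mul _ _ (by simpa using (algebraMap Fq F).injective.ne hlead)
        (pow_ne_zero _ hx0), P.v_algebraMap _ hlead, P.v_pow x hx0, zero_add]
  rcases eq_or_ne p.eraseLead 0 with he | he
  · rw [hmain, he, map_zero, add_zero, hvt]
  · have hd0 : p.natDegree ≠ 0 := by
      intro h
      rcases Polynomial.natDegree_eq_zero.1 h with ⟨a, rfl⟩
      simp at he
    have hdeg : p.eraseLead.natDegree ≤ p.natDegree - 1 := Polynomial.eraseLead_natDegree_le p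
    have hge : ((p.natDegree - 1 : ℕ) : ℤ) * P.v x ≤ P.v (Polynomial.aeval x p.eraseLead) :=
      P.v_aeval_ge x hx _ _ hdeg
    have hlt : P.v (algebraMap Fq F p.leadingCoeff * x ^ p.natDegree)
        < P.v (Polynomial.aeval x p.eraseLead) := by
      rw [hvt]
      have h1 : ((p.natDegree - 1 : ℕ) : ℤ) = (p.natDegree : ℤ) - 1 := by
        have h2 : 1 ≤ p.natDegree := by omega
        push_cast [h2]; ring
      rw [h1] at hge
      have hexp : (p.natDegree : ℤ) * P.v x = ((p.natDegree : ℤ) - 1) * P.v x + P.v x := by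
        ring
      linarith
    rw [hmain, P.v_add_eq_left _ _
      (mul_ne_zero (by simpa using (algebraMap Fq F).injective.ne hlead) (pow_ne_zero _ hx0))
      hlt, hvt]

lemma res_eq_of_v_eq (P Q : RationalPlace Fq F) (h : P.v = Q.v) : P.res = Q.res := by
  funext z
  rcases lt_or_ge (P.v z) 0 with hv | hv
  · rw [P.res_pole z hv, Q.res_pole z (h ▸ hv)]
  rcases eq_or_ne z (algebraMap Fq F (P.res z)) with hz | hz
  · conv_lhs => rw [hz, P.res_algebraMap]
    conv_rhs => rw [hz, Q.res_algebraMap]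
  have hvz : 0 ≤ P.v (z - algebraMap Fq F (P.res z)) := by
    have hne : z - algebraMap Fq F (P.res z) ≠ 0 := sub_ne_zero.2 hz
    have h3 := P.v_add' z (-(algebraMap Fq F (P.res z))) (by rw [← sub_eq_add_neg]; exact hne)
    rw [P.v_neg, ← sub_eq_add_neg] at h3
    have h2 := P.v_algebraMap_nonneg (P.res z)
    omega
  have hres0 : P.res (z - algebraMap Fq F (P.res z)) = 0 := by
    have h1 := P.res_add (z - algebraMap Fq F (P.res z)) (algebraMap Fq F (P.res z))
      hvz (P.v_algebraMap_nonneg _)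
    rw [sub_add_cancel, P.res_algebraMap] at h1
    linear_combination -h1
  have hpos : 0 < P.v (z - algebraMap Fq F (P.res z)) := by
    rcases (P.res_eq_zero_iff _ hvz).1 hres0 with h1 | h1
    · exact absurd (by linear_combination h1) hz
    · exact h1
  have hq : Q.res (z - algebraMap Fq F (P.res z)) = 0 := Q.res_of_pos _ (h ▸ hpos)
  have h2 := Q.res_add (z - algebraMap Fq F (P.res z)) (algebraMap Fq F (P.res z))
    (h ▸ hvz) (Q.v_algebraMap_nonneg _)
  rw [sub_add_cancel, Q.res_algebraMap, hq, zero_add] at h2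
  exact h2.symm ▸ h2

end RationalPlace

namespace RationalPlace

variable {Fq F : Type*} [Field Fq] [Field F] [Algebra Fq F]

lemma ext_of_v_eq {P Q : RationalPlace Fq F} (h : P.v = Q.v) : P = Q := by
  have hres := res_eq_of_v_eq P Q h
  cases P; cases Q
  simp only [mk.injEq]
  exact ⟨h, hres⟩

lemma exists_pos_nonpos {P Q : RationalPlace Fq F} (h : P ≠ Q) :
    ∃ z : F, z ≠ 0 ∧ 0 < P.v z ∧ Q.v z ≤ 0 := by
  by_contra hc
  push_neg at hc
  have key : ∀ z : F, z ≠ 0 → 0 < P.v z → 0 < Q.v z := hc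
  obtain ⟨π, hπ0, hπ1⟩ := P.v_surj
  set e := Q.v π with he
  have hepos : 0 < e := key π hπ0 (by omega)
  have hval : ∀ x : F, x ≠ 0 → Q.v x = e * P.v x := by
    intro x hx
    set k := P.v x with hk
    have h1 : Q.v x ≥ e * k := by
      have hz : x ^ (e : ℤ) * π ^ (1 - e * k) ≠ 0 :=
        mul_ne_zero (zpow_ne_zero _ hx) (zpow_ne_zero _ hπ0)
      have hP : P.v (x ^ (e : ℤ) * π ^ (1 - e * k)) = 1 := by
        rw [P.v_mul _ _ (zpow_ne_zero _ hx) (zpow_ne_zero _ hπ0),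
          P.v_zpow x hx, P.v_zpow π hπ0, hπ1, ← hk]
        ring
      have := key _ hz (by omega)
      rw [Q.v_mul _ _ (zpow_ne_zero _ hx) (zpow_ne_zero _ hπ0),
        Q.v_zpow x hx, Q.v_zpow π hπ0, ← he] at this
      nlinarith
    have h2 : Q.v x ≤ e * k := by
      have hz : x ^ (-e : ℤ) * π ^ (1 + e * k) ≠ 0 :=
        mul_ne_zero (zpow_ne_zero _ hx) (zpow_ne_zero _ hπ0)
      have hP : P.v (x ^ (-e : ℤ) * π ^ (1 + e * k)) = 1 := by
        rw [P.v_mul _ _ (zpow_ne_zero _ hx) (zpow_ne_zero _ hπ0),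
          P.v_zpow x hx, P.v_zpow π hπ0, hπ1, ← hk]
        ring
      have := key _ hz (by omega)
      rw [Q.v_mul _ _ (zpow_ne_zero _ hx) (zpow_ne_zero _ hπ0),
        Q.v_zpow x hx, Q.v_zpow π hπ0, ← he] at this
      nlinarith
    omega
  have he1 : e = 1 := by
    obtain ⟨y, hy0, hy1⟩ := Q.v_surj
    have := hval y hy0
    rw [hy1] at this
    rcases Int.eq_one_of_mul_eq_one_right (by omega) this.symm with h1
    omega
  apply h
  apply ext_of_v_eq
  funext z
  rcases eq_or_ne z 0 with rfl | hz
  · rw [P.v_zero, Q.v_zero]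
  · rw [hval z hz, he1, one_mul]

lemma exists_pos_neg {P Q : RationalPlace Fq F} (h : P ≠ Q) :
    ∃ z : F, z ≠ 0 ∧ 0 < P.v z ∧ Q.v z < 0 := by
  obtain ⟨z₁, hz₁0, hz₁P, hz₁Q⟩ := exists_pos_nonpos h
  obtain ⟨z₂, hz₂0, hz₂Q, hz₂P⟩ := exists_pos_nonpos (Ne.symm h)
  refine ⟨z₁ / z₂, div_ne_zero hz₁0 hz₂0, ?_, ?_⟩
  · rw [P.v_div _ _ hz₁0 hz₂0]; omega
  · rw [Q.v_div _ _ hz₁0 hz₂0]; omega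

lemma exists_neg_pos_finset (Q : RationalPlace Fq F) (T : Finset (RationalPlace Fq F))
    (hQ : Q ∉ T) : ∃ z : F, z ≠ 0 ∧ Q.v z < 0 ∧ ∀ R ∈ T, 0 < R.v z := by
  classical
  induction T using Finset.induction_on with
  | empty =>
    obtain ⟨π, hπ0, hπ1⟩ := Q.v_surj
    exact ⟨π⁻¹, inv_ne_zero hπ0, by rw [Q.v_inv π hπ0]; omega, fun R hR => absurd hR (by simp)⟩
  | insert R T' hni ih =>
    have hQR : Q ∉ T' := fun hmem => hQ (Finset.mem_insert_of_mem hmem)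
    have hQneR : R ≠ Q := fun hc => hQ (hc ▸ Finset.mem_insert_self R T')
    obtain ⟨z, hz0, hzQ, hzT⟩ := ih hQR
    obtain ⟨y, hy0, hyR, hyQ⟩ := exists_pos_neg hQneR
    -- choose a large exponent m
    set m : ℕ := (T'.sup fun S => (-(S.v y)).toNat) + 1 with hm
    have hm1 : 1 ≤ m := by omega
    have hmS : ∀ S ∈ T', -(S.v y) < (m : ℤ) := by
      intro S hS
      have h1 : (-(S.v y)).toNat ≤ T'.sup fun S => (-(S.v y)).toNat :=
        Finset.le_sup (f := fun S => (-(S.v y)).toNat) hS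
      omega
    rcases lt_trichotomy (R.v z) 0 with hneg | hzero | hpos
    · -- w := y * z^m / (1 + z^m)
      have htne : (1 : F) + z ^ m ≠ 0 := by
        intro hc
        have hzm : z ^ m = -1 := by linear_combination hc
        have := Q.v_pow z hz0 m
        rw [hzm] at this
        rw [show ((-1 : F)) = -(1 : F) by ring, Q.v_neg, Q.v_one] at this
        nlinarith [hzQ, (by exact_mod_cast hm1 : (1:ℤ) ≤ (m:ℤ))]
      refine ⟨y * z ^ m / (1 + z ^ m),
        div_ne_zero (mul_ne_zero hy0 (pow_ne_zero _ hz0)) htne, ?_, ?_⟩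
      · rw [Q.v_div _ _ (mul_ne_zero hy0 (pow_ne_zero _ hz0)) htne,
          Q.v_mul _ _ hy0 (pow_ne_zero _ hz0), Q.v_pow z hz0,
          show (1 : F) + z ^ m = z ^ m + 1 by ring,
          Q.v_add_eq_left _ _ (pow_ne_zero _ hz0)
            (by rw [Q.v_pow z hz0, Q.v_one];
                nlinarith [hzQ, (by exact_mod_cast hm1 : (1:ℤ) ≤ (m:ℤ))]),
          Q.v_pow z hz0]
        omega
      · intro S hS
        rw [Finset.mem_insert] at hS
        rcases hS with rfl | hS
        · rw [S.v_div _ _ (mul_ne_zero hy0 (pow_ne_zero _ hz0)) htne,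
            S.v_mul _ _ hy0 (pow_ne_zero _ hz0),
            show (1 : F) + z ^ m = z ^ m + 1 by ring,
            S.v_add_eq_left _ _ (pow_ne_zero _ hz0)
              (by rw [S.v_pow z hz0, S.v_one];
                  nlinarith [hneg, (by exact_mod_cast hm1 : (1:ℤ) ≤ (m:ℤ))])]
          omega
        · have hSz := hzT S hS
          have hSy := hmS S hS
          rw [S.v_div _ _ (mul_ne_zero hy0 (pow_ne_zero _ hz0)) htne,
            S.v_mul _ _ hy0 (pow_ne_zero _ hz0), S.v_pow z hz0,
            S.v_add_eq_left 1 (z ^ m) one_ne_zero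
              (by rw [S.v_pow z hz0, S.v_one];
                  nlinarith [hSz, (by exact_mod_cast hm1 : (1:ℤ) ≤ (m:ℤ))]),
            S.v_one]
          nlinarith [hSz, (by exact_mod_cast hm1 : (1:ℤ) ≤ (m:ℤ))]
    · -- w := y * z^m
      refine ⟨y * z ^ m, mul_ne_zero hy0 (pow_ne_zero _ hz0), ?_, ?_⟩
      · rw [Q.v_mul _ _ hy0 (pow_ne_zero _ hz0), Q.v_pow z hz0]
        nlinarith [hyQ, hzQ, (by exact_mod_cast hm1 : (1:ℤ) ≤ (m:ℤ))]
      · intro S hS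
        rw [Finset.mem_insert] at hS
        rcases hS with rfl | hS
        · rw [S.v_mul _ _ hy0 (pow_ne_zero _ hz0), S.v_pow z hz0, hzero]
          omega
        · have hSz := hzT S hS
          have hSy := hmS S hS
          rw [S.v_mul _ _ hy0 (pow_ne_zero _ hz0), S.v_pow z hz0]
          nlinarith
    · exact ⟨z, hz0, hzQ, fun S hS => by
        rw [Finset.mem_insert] at hS
        rcases hS with rfl | hS
        · exact hpos
        · exact hzT S hS⟩

lemma approx {s : ℕ} (P : Fin s → RationalPlace Fq F) (hinj : Function.Injective P) :
    ∃ u : Fin s → F, ∀ i, u i ≠ 0 ∧ (P i).v (u i) = 0 ∧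
      ∀ j, j ≠ i → 1 ≤ (P j).v (u i) := by
  classical
  have H : ∀ i : Fin s, ∃ ui : F, ui ≠ 0 ∧ (P i).v ui = 0 ∧
      ∀ j, j ≠ i → 1 ≤ (P j).v ui := by
    intro i
    set T : Finset (RationalPlace Fq F) := (Finset.univ.erase i).image P with hT
    have hPi : P i ∉ T := by
      intro hmem
      rw [hT, Finset.mem_image] at hmem
      obtain ⟨j, hj, hji⟩ := hmem
      exact (Finset.mem_erase.1 hj).1 (hinj hji)
    obtain ⟨z', hz'0, hz'Q, hz'T⟩ := exists_neg_pos_finset (P i) T hPi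
    set z : F := z'⁻¹ with hz
    have hz0 : z ≠ 0 := inv_ne_zero hz'0
    have hziv : 0 < (P i).v z := by rw [hz, (P i).v_inv _ hz'0]; omega
    have hzjv : ∀ j, j ≠ i → (P j).v z < 0 := by
      intro j hj
      have : P j ∈ T := by
        rw [hT, Finset.mem_image]
        exact ⟨j, Finset.mem_erase.2 ⟨hj, Finset.mem_univ j⟩, rfl⟩
      have := hz'T (P j) this
      rw [hz, (P j).v_inv _ hz'0]; omega
    have hone : (1 : F) + z ≠ 0 := by
      intro hc
      have hzeq : z = -1 := by linear_combination hc
      rw [hzeq, show ((-1 : F)) = -(1 : F) by ring, (P i).v_neg, (P i).v_one] at hziv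
      omega
    refine ⟨(1 + z)⁻¹, inv_ne_zero hone, ?_, ?_⟩
    · rw [(P i).v_inv _ hone,
        (P i).v_add_eq_left 1 z one_ne_zero (by rw [(P i).v_one]; omega), (P i).v_one]
      ring
    · intro j hj
      rw [(P j).v_inv _ hone, show (1 : F) + z = z + 1 by ring,
        (P j).v_add_eq_left z 1 hz0 (by rw [(P j).v_one]; exact hzjv j hj), ]
      have := hzjv j hj
      omega
  choose u hu using H
  exact ⟨u, fun i => hu i⟩

end RationalPlace

namespace RationalPlace

open Polynomial

variable {Fq F : Type*} [Field Fq] [Field F] [Algebra Fq F]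

lemma aeval_ne_zero_of_transcendental {f : F} (hft : Transcendental Fq f)
    {p : Fq[X]} (hp : p ≠ 0) : Polynomial.aeval f p ≠ 0 :=
  fun h0 => hft ⟨p, hp, h0⟩

lemma exists_rep (α : F) (c : F) (hc : c ∈ IntermediateField.adjoin Fq {α}) :
    ∃ p q : Fq[X], Polynomial.aeval α q ≠ 0 ∧
      c = Polynomial.aeval α p / Polynomial.aeval α q := by
  obtain ⟨p, q, h⟩ := (IntermediateField.mem_adjoin_simple_iff Fq c).1 hc
  by_cases hq : Polynomial.aeval α q = 0
  · exact ⟨0, 1, by simp, by simp [h, hq]⟩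
  · exact ⟨p, q, hq, h⟩

/-- The normalization condition needed in the linear independence argument. -/
def Good {s : ℕ} (P : Fin s → RationalPlace Fq F) (f : F) : Prop :=
  ∀ c : Fin s → Fq[X], (∃ i, c i ≠ 0) →
    ∃ lam : F, lam ≠ 0 ∧ ∃ i0 : Fin s,
      (∀ i j, 0 ≤ (P j).v (Polynomial.aeval f (c i) / lam)) ∧
      (P i0).v (Polynomial.aeval f (c i0) / lam) = 0 ∧
      Polynomial.aeval f (c i0) / lam ≠ 0

lemma card_le_of_good {s : ℕ} (f : F)
    [FiniteDimensional (IntermediateField.adjoin Fq {f}) F]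
    (P : Fin s → RationalPlace Fq F) (hinj : Function.Injective P)
    (hgood : Good P f) :
    s ≤ Module.finrank (IntermediateField.adjoin Fq {f}) F := by
  classical
  obtain ⟨u, hu⟩ := approx P hinj
  set K := IntermediateField.adjoin Fq {f} with hK
  have hli : LinearIndependent K u := by
    rw [Fintype.linearIndependent_iff]
    intro g hg
    by_contra hne
    push_neg at hne
    obtain ⟨iw, hiw⟩ := hne
    have hrep := fun i => exists_rep f ((g i : F)) (g i).2
    choose p q hq hpq using hrep
    set D : F := ∏ j, Polynomial.aeval f (q j) with hD
    have hD0 : D ≠ 0 := Finset.prod_ne_zero_iff.2 fun j _ => hq j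
    set c : Fin s → Fq[X] := fun i => p i * ∏ j ∈ Finset.univ.erase i, q j with hc
    have hcval : ∀ i, Polynomial.aeval f (c i) = (g i : F) * D := by
      intro i
      rw [hc]
      simp only [map_mul, map_prod]
      rw [hpq i, hD,
        ← Finset.mul_prod_erase Finset.univ (fun j => Polynomial.aeval f (q j))
          (Finset.mem_univ i)]
      rw [div_mul_eq_mul_div, mul_comm (Polynomial.aeval f (q i)), ← mul_assoc,
        mul_div_cancel_right₀ _ (hq i)]
    have hcne : ∃ i, c i ≠ 0 := by
      refine ⟨iw, fun h0 => ?_⟩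
      have h1 : Polynomial.aeval f (c iw) = 0 := by rw [h0, map_zero]
      rw [hcval iw] at h1
      have hgiw : ((g iw : F)) ≠ 0 := fun hh => hiw (by exact_mod_cast Subtype.ext hh)
      exact (mul_ne_zero hgiw hD0) h1
    obtain ⟨lam, hlam0, i0, hvpos, hvi0, hne0⟩ := hgood c hcne
    set t : Fin s → F := fun i => Polynomial.aeval f (c i) / lam with ht
    have hsmul : ∀ i, g i • u i = (g i : F) * u i := fun i => rfl
    have h1 : ∑ i, (g i : F) * u i = 0 := by
      rw [← hg]
      exact Finset.sum_congr rfl fun i _ => (hsmul i).symm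
    have hsum0 : ∑ i, t i * u i = 0 := by
      have h2 : ∑ i, t i * u i = (∑ i, (g i : F) * u i) * D / lam := by
        rw [Finset.sum_mul, Finset.sum_div]
        refine Finset.sum_congr rfl fun i _ => ?_
        rw [ht]
        simp only
        rw [hcval i]
        ring
      rw [h2, h1, zero_mul, zero_div]
    have hvu : ∀ i, 0 ≤ (P i0).v (u i) := by
      intro i
      rcases eq_or_ne i i0 with rfl | hii
      · rw [(hu i).2.1]
      · have := (hu i).2.2 i0 (Ne.symm hii)
        omega
    have hvtu : ∀ i, 0 ≤ (P i0).v (t i * u i) := by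
      intro i
      rcases eq_or_ne (t i) 0 with h0 | h0
      · rw [h0, zero_mul, (P i0).v_zero]
      rw [(P i0).v_mul _ _ h0 (hu i).1]
      have h6 : 0 ≤ (P i0).v (t i) := hvpos i i0
      have := hvu i
      omega
    have hres : (0 : Fq) = (P i0).res (t i0) * (P i0).res (u i0) := by
      have h3 : (P i0).res (∑ i, t i * u i) = ∑ i, (P i0).res (t i * u i) :=
        (P i0).res_sum _ _ fun i _ => hvtu i
      rw [hsum0, (P i0).res_zero] at h3
      have h4 : ∀ i, (P i0).res (t i * u i) = (P i0).res (t i) * (P i0).res (u i) :=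
        fun i => (P i0).res_mul _ _ (hvpos i i0) (hvu i)
      have h5 : ∑ i, (P i0).res (t i) * (P i0).res (u i)
          = (P i0).res (t i0) * (P i0).res (u i0) := by
        refine Finset.sum_eq_single i0 (fun i _ hii => ?_) (by simp)
        rw [(P i0).res_of_pos (u i) (by
          have := (hu i).2.2 i0 (Ne.symm hii); omega), mul_zero]
      calc (0 : Fq) = ∑ i, (P i0).res (t i * u i) := h3
        _ = ∑ i, (P i0).res (t i) * (P i0).res (u i) :=
            Finset.sum_congr rfl fun i _ => h4 i
        _ = (P i0).res (t i0) * (P i0).res (u i0) := h5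
    have hvi0' : (P i0).v (t i0) = 0 := hvi0
    have hne0' : t i0 ≠ 0 := hne0
    have hrt : (P i0).res (t i0) ≠ 0 := (P i0).res_ne_zero _ hne0' hvi0'
    have hru : (P i0).res (u i0) ≠ 0 := (P i0).res_ne_zero _ (hu i0).1 (hu i0).2.1
    exact (mul_ne_zero hrt hru) hres.symm
  simpa using hli.fintype_card_le_finrank

lemma good_pole {s : ℕ} {f : F} (hft : Transcendental Fq f)
    (P : Fin s → RationalPlace Fq F) (hp : ∀ j, (P j).v f < 0) : Good P f := by
  classical
  rintro c ⟨iw, hiw⟩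
  have hf0 : f ≠ 0 := by
    intro h
    have := hp iw
    rw [h, (P iw).v_zero] at this
    omega
  set d : ℕ := Finset.univ.sup fun i => (c i).natDegree with hd
  have hdle : ∀ i, (c i).natDegree ≤ d :=
    fun i => Finset.le_sup (f := fun i => (c i).natDegree) (Finset.mem_univ i)
  obtain ⟨i0, hi0ne, hi0deg⟩ : ∃ i0, c i0 ≠ 0 ∧ (c i0).natDegree = d := by
    by_cases h : (c iw).natDegree = d
    · exact ⟨iw, hiw, h⟩
    · have hd0 : d ≠ 0 := by
        intro h0
        exact h (by have := hdle iw; omega)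
      obtain ⟨i1, _, hi1⟩ := Finset.exists_mem_eq_sup Finset.univ
        ⟨iw, Finset.mem_univ iw⟩ fun i => (c i).natDegree
      refine ⟨i1, ?_, hi1.symm⟩
      intro h0
      rw [h0] at hi1
      simp only [Polynomial.natDegree_zero] at hi1
      exact hd0 (hd ▸ hi1)
  have haei0 : Polynomial.aeval f (c i0) ≠ 0 := aeval_ne_zero_of_transcendental hft hi0ne
  refine ⟨f ^ d, pow_ne_zero _ hf0, i0, ?_, ?_, ?_⟩
  · intro i j
    rcases eq_or_ne (c i) 0 with h0 | h0
    · rw [h0, map_zero, zero_div, (P j).v_zero]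
    have haei : Polynomial.aeval f (c i) ≠ 0 := aeval_ne_zero_of_transcendental hft h0
    rw [(P j).v_div _ _ haei (pow_ne_zero _ hf0), (P j).v_pow f hf0]
    have := (P j).v_aeval_ge f (hp j) d (c i) (hdle i)
    omega
  · rw [(P i0).v_div _ _ haei0 (pow_ne_zero _ hf0), (P i0).v_pow f hf0,
      (P i0).v_aeval_eq f (hp i0) _ hi0ne, hi0deg]
    ring
  · exact div_ne_zero haei0 (pow_ne_zero _ hf0)

lemma good_zero {s : ℕ} {f : F} (hft : Transcendental Fq f) (a : Fq)
    (P : Fin s → RationalPlace Fq F)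
    (hp : ∀ j, 0 < (P j).v (f - algebraMap Fq F a)) : Good P f := by
  classical
  rintro c ⟨iw, hiw⟩
  set g : F := f - algebraMap Fq F a with hg
  have hgf : f = g + algebraMap Fq F a := by rw [hg]; ring
  have hg0 : g ≠ 0 := by
    intro h
    have := hp iw
    rw [h, (P iw).v_zero] at this
    omega
  have hf0 : f ≠ 0 := by
    intro h0
    apply hft
    exact ⟨Polynomial.X, Polynomial.X_ne_zero, by simp [h0]⟩
  have hvf : ∀ j, 0 ≤ (P j).v f := by
    intro j
    have h2 := (P j).v_add' g (algebraMap Fq F a) (by rw [← hgf]; exact hf0)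
    have h3 := (P j).v_algebraMap_nonneg a
    have h4 := hp j
    rw [hgf]
    omega
  have hresf : ∀ j, (P j).res f = a := by
    intro j
    have h4 := hp j
    rw [hgf, (P j).res_add g _ (le_of_lt h4) ((P j).v_algebraMap_nonneg a),
      (P j).res_of_pos g h4, (P j).res_algebraMap, zero_add]
  set m : Fin s → ℕ := fun i => (c i).rootMultiplicity a with hm
  set T : Finset (Fin s) := Finset.univ.filter fun i => c i ≠ 0 with hT
  have hTne : T.Nonempty := ⟨iw, by rw [hT]; simp [hiw]⟩
  set k : ℕ := T.inf' hTne m with hk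
  obtain ⟨i0, hi0T, hi0⟩ := T.exists_mem_eq_inf' hTne m
  have hi0ne : c i0 ≠ 0 := by
    rw [hT] at hi0T
    exact (Finset.mem_filter.1 hi0T).2
  have hkle : ∀ i, c i ≠ 0 → k ≤ m i := by
    intro i hi
    exact Finset.inf'_le m (by rw [hT]; simp [hi])
  set Q : Fin s → Fq[X] := fun i => (c i) /ₘ (Polynomial.X - Polynomial.C a) ^ (m i) with hQ
  have hfact : ∀ i, c i ≠ 0 → Polynomial.aeval f (c i) / g ^ k
      = g ^ (m i - k) * Polynomial.aeval f (Q i) := by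
    intro i hi
    have hdvd := Polynomial.pow_mul_divByMonic_rootMultiplicity_eq (c i) a
    have h5 : Polynomial.aeval f (c i) = g ^ (m i) * Polynomial.aeval f (Q i) := by
      conv_lhs => rw [← hdvd]
      rw [map_mul, map_pow, map_sub, Polynomial.aeval_X, Polynomial.aeval_C, ← hg]
    rw [h5, ← pow_sub_mul_pow g (hkle i hi), mul_right_comm,
      mul_div_assoc, div_self (pow_ne_zero _ hg0), mul_one]
  have hevalQ : ∀ i, c i ≠ 0 → Polynomial.eval a (Q i) ≠ 0 := by
    intro i hi
    exact Polynomial.eval_divByMonic_pow_rootMultiplicity_ne_zero a hi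
  have hvQ : ∀ i, c i ≠ 0 → ∀ j, (P j).v (Polynomial.aeval f (Q i)) = 0 := by
    intro i hi j
    have hQne : Q i ≠ 0 := by
      intro h0
      exact hevalQ i hi (by rw [h0, Polynomial.eval_zero])
    refine (P j).v_res_eq_zero _ (aeval_ne_zero_of_transcendental hft hQne)
      ((P j).v_aeval_nonneg f (hvf j) (Q i)) ?_
    rw [(P j).res_aeval f (hvf j) (Q i), hresf j]
    exact hevalQ i hi
  have haei0 : Polynomial.aeval f (c i0) ≠ 0 := aeval_ne_zero_of_transcendental hft hi0ne
  refine ⟨g ^ k, pow_ne_zero _ hg0, i0, ?_, ?_, ?_⟩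
  · intro i j
    rcases eq_or_ne (c i) 0 with h0 | h0
    · rw [h0, map_zero, zero_div, (P j).v_zero]
    rw [hfact i h0]
    have hQne : Polynomial.aeval f (Q i) ≠ 0 :=
      aeval_ne_zero_of_transcendental hft
        (fun h0' => hevalQ i h0 (by rw [h0', Polynomial.eval_zero]))
    rcases Nat.eq_zero_or_pos (m i - k) with hmk | hmk
    · rw [hmk, pow_zero, one_mul, hvQ i h0 j]
    rw [(P j).v_mul _ _ (pow_ne_zero _ hg0) hQne, (P j).v_pow g hg0, hvQ i h0 j]
    have h4 := hp j
    have h5 : (0:ℤ) ≤ ((m i - k : ℕ) : ℤ) := Int.natCast_nonneg _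
    nlinarith
  · rw [hfact i0 hi0ne, show m i0 - k = 0 by omega, pow_zero, one_mul]
    exact hvQ i0 hi0ne i0
  · exact div_ne_zero haei0 (pow_ne_zero _ hg0)

end RationalPlace

namespace RationalPlace

open Polynomial IntermediateField

variable {Fq F : Type*} [Field Fq] [Field F] [Algebra Fq F]

lemma aeval_mem_adjoin (f : F) (p : Fq[X]) :
    Polynomial.aeval f p ∈ IntermediateField.adjoin Fq {f} :=
  IntermediateField.algebra_adjoin_le_adjoin Fq {f} (Polynomial.aeval_mem_adjoin_singleton Fq f)

lemma isAlgebraic_exchange (x f : F)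
    [FiniteDimensional (IntermediateField.adjoin Fq {x}) F]
    (hft : Transcendental Fq f) :
    IsAlgebraic (IntermediateField.adjoin Fq {f}) x := by
  classical
  have hfalg : IsAlgebraic (IntermediateField.adjoin Fq {x}) f :=
    (IsIntegral.of_finite _ f).isAlgebraic
  obtain ⟨P0, hP0ne, hP0⟩ := hfalg
  set N := P0.natDegree with hN
  have hrep := fun i : ℕ => exists_rep (Fq := Fq) x ((P0.coeff i : F)) (P0.coeff i).2
  choose p q hq hpq using hrep
  set D : F := ∏ j ∈ Finset.range (N + 1), Polynomial.aeval x (q j) with hD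
  have hD0 : D ≠ 0 := Finset.prod_ne_zero_iff.2 fun j _ => hq j
  set c : ℕ → Fq[X] := fun i => p i * ∏ j ∈ (Finset.range (N + 1)).erase i, q j with hc
  have hcval : ∀ i ∈ Finset.range (N + 1),
      Polynomial.aeval x (c i) = (P0.coeff i : F) * D := by
    intro i hi
    rw [hc]
    simp only [map_mul, map_prod]
    rw [hpq i, hD,
      ← Finset.mul_prod_erase (Finset.range (N + 1)) (fun j => Polynomial.aeval x (q j)) hi,
      div_mul_eq_mul_div, mul_comm (Polynomial.aeval x (q i)), ← mul_assoc,
      mul_div_cancel_right₀ _ (hq i)]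
  have hrel : ∑ i ∈ Finset.range (N + 1), Polynomial.aeval x (c i) * f ^ i = 0 := by
    have h3 := Polynomial.aeval_eq_sum_range (p := P0) f
    rw [hP0] at h3
    have h2 : ∑ i ∈ Finset.range (N + 1), ((P0.coeff i : F)) * f ^ i = 0 := by
      calc ∑ i ∈ Finset.range (N + 1), ((P0.coeff i : F)) * f ^ i
          = ∑ i ∈ Finset.range (N + 1), (P0.coeff i) • f ^ i :=
            Finset.sum_congr rfl fun i _ => rfl
        _ = 0 := h3.symm
    calc ∑ i ∈ Finset.range (N + 1), Polynomial.aeval x (c i) * f ^ i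
        = ∑ i ∈ Finset.range (N + 1), ((P0.coeff i : F) * f ^ i) * D := by
          refine Finset.sum_congr rfl fun i hi => ?_
          rw [hcval i hi]; ring
      _ = (∑ i ∈ Finset.range (N + 1), (P0.coeff i : F) * f ^ i) * D := by
          rw [Finset.sum_mul]
      _ = 0 := by rw [h2, zero_mul]
  have hcN : c N ≠ 0 := by
    intro h0
    have h1 : Polynomial.aeval x (c N) = 0 := by rw [h0, map_zero]
    rw [hcval N (Finset.self_mem_range_succ N)] at h1
    have h2 : (P0.coeff N : F) ≠ 0 := by
      have : P0.coeff N ≠ 0 := by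
        rw [hN]
        exact Polynomial.leadingCoeff_ne_zero.2 hP0ne
      exact fun hh => this (by exact_mod_cast Subtype.ext hh)
    exact (mul_ne_zero h2 hD0) h1
  set M : ℕ := ((Finset.range (N + 1)).sup fun i => (c i).natDegree) + 1 with hM
  have hdeg : ∀ i ∈ Finset.range (N + 1), (c i).natDegree < M := by
    intro i hi
    have h1 : (c i).natDegree ≤ (Finset.range (N + 1)).sup fun i => (c i).natDegree :=
      Finset.le_sup (f := fun i => (c i).natDegree) hi
    omega
  set d : ℕ → Fq[X] :=
    fun k => ∑ i ∈ Finset.range (N + 1), Polynomial.C ((c i).coeff k) * Polynomial.X ^ i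
    with hdd
  have hswap : ∑ k ∈ Finset.range M, Polynomial.aeval f (d k) * x ^ k
      = ∑ i ∈ Finset.range (N + 1), Polynomial.aeval x (c i) * f ^ i := by
    have hL : ∀ k, Polynomial.aeval f (d k) * x ^ k
        = ∑ i ∈ Finset.range (N + 1), algebraMap Fq F ((c i).coeff k) * f ^ i * x ^ k := by
      intro k
      rw [hdd]
      simp only [map_sum, map_mul, Polynomial.aeval_C, map_pow, Polynomial.aeval_X]
      rw [Finset.sum_mul]
    have hR : ∀ i ∈ Finset.range (N + 1), Polynomial.aeval x (c i) * f ^ i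
        = ∑ k ∈ Finset.range M, algebraMap Fq F ((c i).coeff k) * f ^ i * x ^ k := by
      intro i hi
      rw [Polynomial.aeval_eq_sum_range' (hdeg i hi) x, Finset.sum_mul]
      refine Finset.sum_congr rfl fun k _ => ?_
      rw [Algebra.smul_def]; ring
    calc ∑ k ∈ Finset.range M, Polynomial.aeval f (d k) * x ^ k
        = ∑ k ∈ Finset.range M, ∑ i ∈ Finset.range (N + 1),
            algebraMap Fq F ((c i).coeff k) * f ^ i * x ^ k :=
          Finset.sum_congr rfl fun k _ => hL k
      _ = ∑ i ∈ Finset.range (N + 1), ∑ k ∈ Finset.range M,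
            algebraMap Fq F ((c i).coeff k) * f ^ i * x ^ k := Finset.sum_comm
      _ = ∑ i ∈ Finset.range (N + 1), Polynomial.aeval x (c i) * f ^ i :=
          (Finset.sum_congr rfl fun i hi => (hR i hi).symm)
  have hdk : d ((c N).natDegree) ≠ 0 := by
    intro h0
    have h1 : (d ((c N).natDegree)).coeff N = (c N).coeff ((c N).natDegree) := by
      rw [hdd, Polynomial.finset_sum_coeff]
      rw [Finset.sum_eq_single N]
      · rw [Polynomial.coeff_C_mul, Polynomial.coeff_X_pow, if_pos rfl, mul_one]
      · intro i _ hiN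
        rw [Polynomial.coeff_C_mul, Polynomial.coeff_X_pow, if_neg (fun hh => hiN hh.symm),
          mul_zero]
      · intro hN'
        exact absurd (Finset.self_mem_range_succ N) hN'
    rw [h0, Polynomial.coeff_zero] at h1
    exact (Polynomial.leadingCoeff_ne_zero.2 hcN) h1.symm
  set PP : Polynomial (IntermediateField.adjoin Fq {f}) :=
    ∑ k ∈ Finset.range M, Polynomial.C
      (⟨Polynomial.aeval f (d k), aeval_mem_adjoin f (d k)⟩ : IntermediateField.adjoin Fq {f})
      * Polynomial.X ^ k with hPP
  have hk0M : (c N).natDegree < M := hdeg N (Finset.self_mem_range_succ N)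
  refine ⟨PP, ?_, ?_⟩
  · intro h0
    have h1 : PP.coeff ((c N).natDegree)
        = (⟨Polynomial.aeval f (d ((c N).natDegree)),
            aeval_mem_adjoin f _⟩ : IntermediateField.adjoin Fq {f}) := by
      rw [hPP, Polynomial.finset_sum_coeff]
      rw [Finset.sum_eq_single ((c N).natDegree)]
      · rw [Polynomial.coeff_C_mul, Polynomial.coeff_X_pow, if_pos rfl, mul_one]
      · intro k _ hk
        rw [Polynomial.coeff_C_mul, Polynomial.coeff_X_pow, if_neg (fun hh => hk hh.symm),
          mul_zero]
      · intro hk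
        exact absurd (Finset.mem_range.2 hk0M) hk
    rw [h0, Polynomial.coeff_zero] at h1
    have h2 : Polynomial.aeval f (d ((c N).natDegree)) = 0 := by
      have := congrArg (Subtype.val) h1
      exact this.symm
    exact aeval_ne_zero_of_transcendental hft hdk h2
  · rw [hPP]
    simp only [map_sum, map_mul, Polynomial.aeval_C, map_pow, Polynomial.aeval_X]
    have : ∀ k, (algebraMap (IntermediateField.adjoin Fq {f}) F)
        (⟨Polynomial.aeval f (d k), aeval_mem_adjoin f (d k)⟩ :
          IntermediateField.adjoin Fq {f}) = Polynomial.aeval f (d k) := fun k => rfl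
    calc ∑ k ∈ Finset.range M, (algebraMap (IntermediateField.adjoin Fq {f}) F)
          (⟨Polynomial.aeval f (d k), aeval_mem_adjoin f (d k)⟩ :
            IntermediateField.adjoin Fq {f}) * x ^ k
        = ∑ k ∈ Finset.range M, Polynomial.aeval f (d k) * x ^ k :=
          Finset.sum_congr rfl fun k _ => by rw [this k]
      _ = 0 := by rw [hswap, hrel]

lemma finiteDimensional_exchange (x f : F)
    [FiniteDimensional (IntermediateField.adjoin Fq {x}) F]
    (hft : Transcendental Fq f) :
    FiniteDimensional (IntermediateField.adjoin Fq {f}) F := by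
  classical
  set K := IntermediateField.adjoin Fq {f} with hK
  have halg : IsAlgebraic K x := isAlgebraic_exchange x f hft
  have hint : IsIntegral K x := halg.isIntegral
  set KX : IntermediateField K F := IntermediateField.adjoin K {x} with hKX
  haveI hfd1 : FiniteDimensional K KX := IntermediateField.adjoin.finiteDimensional hint
  have hEle : ∀ z : F, z ∈ IntermediateField.adjoin Fq {x} → z ∈ KX := by
    have h1 : IntermediateField.adjoin Fq {x} ≤ IntermediateField.restrictScalars Fq KX := by
      rw [IntermediateField.adjoin_le_iff]
      intro z hz
      rw [Set.mem_singleton_iff.1 hz]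
      exact IntermediateField.mem_adjoin_simple_self K x
    exact fun z hz => h1 hz
  haveI hfd2 : Module.Finite KX F := by
    obtain ⟨S, hS⟩ := Module.finite_def.1
      (inferInstance : Module.Finite (IntermediateField.adjoin Fq {x}) F)
    rw [Module.finite_def, Submodule.fg_def]
    refine ⟨S, S.finite_toSet, ?_⟩
    rw [eq_top_iff]
    intro z hz0
    clear hz0
    have hz : z ∈ Submodule.span (IntermediateField.adjoin Fq {x}) (S : Set F) := by
      rw [hS]; trivial
    induction hz using Submodule.span_induction with
    | mem w hw => exact Submodule.subset_span hw
    | zero => exact Submodule.zero_mem _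
    | add w₁ w₂ _ _ ih₁ ih₂ => exact Submodule.add_mem _ ih₁ ih₂
    | smul e w _ ih =>
      have heq : e • w = (⟨(e : F), hEle (e : F) e.2⟩ : KX) • w := rfl
      rw [heq]
      exact Submodule.smul_mem _ _ ih
  exact Module.Finite.trans KX F

end RationalPlace

/-- Let `F/F_q` be a function field (a finitely generated extension of transcendence
degree one with full constant field `F_q`) with `N_F` rational places.  Then the gonality
`γ = min {deg (f)_∞ : f ∈ F \ F_q} = min {[F : F_q(f)] : f ∈ F \ F_q}` satisfies
`γ ≥ N_F / (q + 1)`; i.e. for every nonconstant `f`, `N_F/(q+1) ≤ [F : F_q(f)]`. -/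
theorem gonality_lower_bound (Fq F : Type*) [Field Fq] [Fintype Fq] [Field F]
    [Algebra Fq F]
    (x : F) (hx : Transcendental Fq x)
    [FiniteDimensional (IntermediateField.adjoin Fq {x}) F]
    (hconst : ∀ z : F, IsAlgebraic Fq z → z ∈ (algebraMap Fq F).range)
    (f : F) (hf : f ∉ (algebraMap Fq F).range) :
    (Nat.card (RationalPlace Fq F) : ℝ) / (Fintype.card Fq + 1)
      ≤ (Module.finrank (IntermediateField.adjoin Fq {f}) F : ℝ) := by
  classical
  have hft : Transcendental Fq f := fun halg => hf (hconst f halg)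
  haveI : FiniteDimensional (IntermediateField.adjoin Fq {f}) F :=
    RationalPlace.finiteDimensional_exchange x f hft
  set n := Module.finrank (IntermediateField.adjoin Fq {f}) F with hn
  have hcount : Nat.card (RationalPlace Fq F) ≤ (Fintype.card Fq + 1) * n := by
    rcases finite_or_infinite (RationalPlace Fq F) with hfin | hinf
    · haveI := Fintype.ofFinite (RationalPlace Fq F)
      rw [Nat.card_eq_fintype_card]
      set cm : RationalPlace Fq F → Option Fq :=
        fun P => if 0 ≤ P.v f then some (P.res f) else none with hcm
      have hfib : ∀ b : Option Fq,
          (Finset.univ.filter fun P : RationalPlace Fq F => cm P = b).card ≤ n := by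
        intro b
        set T := Finset.univ.filter fun P : RationalPlace Fq F => cm P = b with hT
        set e := T.equivFin with he
        set Pfam : Fin T.card → RationalPlace Fq F := fun i => ((e.symm i : T) : _) with hPf
        have hinj : Function.Injective Pfam := by
          intro i j hij
          have : e.symm i = e.symm j := Subtype.ext hij
          exact e.symm.injective this
        have hmem : ∀ i, Pfam i ∈ T := fun i => (e.symm i).2
        have hb : ∀ i, cm (Pfam i) = b := by
          intro i
          have h1 := hmem i
          rw [hT, Finset.mem_filter] at h1
          exact h1.2
        have hgood : RationalPlace.Good Pfam f := by
          cases b with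
          | none =>
            apply RationalPlace.good_pole hft
            intro j
            have h1 := hb j
            rw [hcm] at h1
            simp only at h1
            by_contra hcon
            push_neg at hcon
            rw [if_pos hcon] at h1
            exact absurd h1 (by simp)
          | some a =>
            apply RationalPlace.good_zero hft a
            intro j
            have h1 := hb j
            rw [hcm] at h1
            simp only at h1
            have hvj : 0 ≤ (Pfam j).v f := by
              by_contra hcon
              push_neg at hcon
              rw [if_neg (by omega : ¬ (0:ℤ) ≤ (Pfam j).v f)] at h1
              exact absurd h1 (by simp)
            rw [if_pos hvj] at h1
            have hres : (Pfam j).res f = a := Option.some.inj h1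
            have hgne : f - algebraMap Fq F a ≠ 0 := by
              intro h0
              exact hf ⟨a, by linear_combination -h0⟩
            have hvg : 0 ≤ (Pfam j).v (f - algebraMap Fq F a) := by
              have h2 := (Pfam j).v_add' f (-(algebraMap Fq F a))
                (by rw [← sub_eq_add_neg]; exact hgne)
              rw [(Pfam j).v_neg, ← sub_eq_add_neg] at h2
              have h3 := (Pfam j).v_algebraMap_nonneg a
              omega
            have hresg : (Pfam j).res (f - algebraMap Fq F a) = 0 := by
              have h2 := (Pfam j).res_add (f - algebraMap Fq F a) (algebraMap Fq F a)
                hvg ((Pfam j).v_algebraMap_nonneg a)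
              rw [sub_add_cancel, (Pfam j).res_algebraMap, hres] at h2
              linear_combination -h2
            rcases ((Pfam j).res_eq_zero_iff _ hvg).1 hresg with h2 | h2
            · exact absurd h2 hgne
            · exact h2
        exact RationalPlace.card_le_of_good f Pfam hinj hgood
      calc Fintype.card (RationalPlace Fq F)
          = (Finset.univ : Finset (RationalPlace Fq F)).card := (Finset.card_univ).symm
        _ = ∑ b ∈ (Finset.univ : Finset (Option Fq)),
              (Finset.univ.filter fun P : RationalPlace Fq F => cm P = b).card :=
            Finset.card_eq_sum_card_fiberwise fun P _ => Finset.mem_univ (cm P)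
        _ ≤ ∑ _b ∈ (Finset.univ : Finset (Option Fq)), n :=
            Finset.sum_le_sum fun b _ => hfib b
        _ = Fintype.card (Option Fq) * n := by
            rw [Finset.sum_const, Finset.card_univ, smul_eq_mul]
        _ = (Fintype.card Fq + 1) * n := by rw [Fintype.card_option]
    · rw [Nat.card_eq_zero_of_infinite]
      exact Nat.zero_le _
  have hq1 : (0:ℝ) < (Fintype.card Fq : ℝ) + 1 := by positivity
  rw [div_le_iff₀ hq1]
  have hcast : (Nat.card (RationalPlace Fq F) : ℝ) ≤ ((Fintype.card Fq + 1) * n : ℕ) := by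
    exact_mod_cast hcount
  push_cast at hcast
  linarith
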